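/- For every u ∈ ℝ^n and every i ∈ {1,…,n}, the polynomial identity I_i(u) − u_i·H(u) = u_i(1 − u_i)·∂H/∂u_i(u) holds. Consequently, at every point u of the open cube (0,1)^n (where H(u) > 0), f_i(u) − u_i = u_i(1 − u_i)·∂(log H)/∂u_i(u); in particular, u ∈ (0,1)^n is a fixed point of f if and only if it is an equilibrium of the gradient system du/dt = grad(log H(u)). -/

import Mathlib

open Matrix Finset

/-- The codeword polynomial `F_x(u) = ∏ i, ρ_i(u_i)` with `ρ_i(u_i) = u_i` if `x_i = 1`
and `1 - u_i` if `x_i = 0`. -/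
noncomputable def codePoly {n : ℕ} (x : Fin n → ZMod 2) (u : Fin n → ℝ) : ℝ :=
  ∏ i, if x i = 1 then u i else 1 - u i

/-- The linear code `C = {mG : m ∈ 𝔽₂^k}` generated by the matrix `G`. -/
def code {k n : ℕ} (G : Matrix (Fin k) (Fin n) (ZMod 2)) : Finset (Fin n → ZMod 2) :=
  Finset.image (fun m => Matrix.vecMul m G) Finset.univ

/-- `H(u) = Σ_{x ∈ C} F_x(u)`. -/
noncomputable def Hfun {k n : ℕ} (G : Matrix (Fin k) (Fin n) (ZMod 2)) (u : Fin n → ℝ) : ℝ :=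
  ∑ x ∈ code G, codePoly x u

/-- `I_i(u) = Σ_{x ∈ C, x_i = 1} F_x(u)`. -/
noncomputable def Ifun {k n : ℕ} (G : Matrix (Fin k) (Fin n) (ZMod 2)) (i : Fin n)
    (u : Fin n → ℝ) : ℝ :=
  ∑ x ∈ (code G).filter (fun x => x i = 1), codePoly x u

/-- The rational map `f_i(u) = I_i(u)/H(u)`. -/
noncomputable def fmap {k n : ℕ} (G : Matrix (Fin k) (Fin n) (ZMod 2)) (i : Fin n)
    (u : Fin n → ℝ) : ℝ :=
  Ifun G i u / Hfun G u

/-- The point `p = (1/2, …, 1/2) ∈ ℝ^n`. -/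
noncomputable def pcenter (n : ℕ) : Fin n → ℝ := fun _ => 1/2

/-- Identification of a binary word with a 0/1 point of `ℝ^n`. -/
noncomputable def embed {n : ℕ} (w : Fin n → ZMod 2) : Fin n → ℝ :=
  fun i => if w i = 1 then 1 else 0

section Aux

variable {n : ℕ}

noncomputable def cpD (x : Fin n → ZMod 2) (u : Fin n → ℝ) :
    (Fin n → ℝ) →L[ℝ] ℝ :=
  ∑ j, (∏ l ∈ Finset.univ.erase j, if x l = 1 then u l else 1 - u l) •
    ((if x j = 1 then (1:ℝ) else -1) • (ContinuousLinearMap.proj j : (Fin n → ℝ) →L[ℝ] ℝ))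

lemma hasFDerivAt_codePoly (x : Fin n → ZMod 2) (u : Fin n → ℝ) :
    HasFDerivAt (codePoly x) (cpD x u) u := by
  have h : ∀ j ∈ Finset.univ, HasFDerivAt (fun v : Fin n → ℝ => if x j = 1 then v j else 1 - v j)
      ((if x j = 1 then (1:ℝ) else -1) • (ContinuousLinearMap.proj j : (Fin n → ℝ) →L[ℝ] ℝ)) u := by
    intro j _
    by_cases hj : x j = 1
    · simp only [hj, if_pos, one_smul]
      exact (ContinuousLinearMap.proj j : (Fin n → ℝ) →L[ℝ] ℝ).hasFDerivAt
    · simp only [hj, if_neg, if_false, neg_smul, one_smul]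
      have := (hasFDerivAt_const (1:ℝ) u).sub
        (ContinuousLinearMap.proj j : (Fin n → ℝ) →L[ℝ] ℝ).hasFDerivAt
      rw [show ((-1:ℝ) • (ContinuousLinearMap.proj j : (Fin n → ℝ) →L[ℝ] ℝ)) = -(ContinuousLinearMap.proj j) by ext v; simp]
      rw [zero_sub] at this
      exact this
  exact HasFDerivAt.finset_prod h

lemma cpD_apply (x : Fin n → ZMod 2) (u : Fin n → ℝ) (i : Fin n) :
    cpD x u (Pi.single i 1) =
      (if x i = 1 then (1:ℝ) else -1) *
        ∏ l ∈ Finset.univ.erase i, if x l = 1 then u l else 1 - u l := by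
  unfold cpD
  rw [ContinuousLinearMap.sum_apply]
  rw [Finset.sum_eq_single i]
  · split <;> simp [Pi.single_apply]
  · intro j _ hji
    split <;> simp [Pi.single_apply, hji.symm]
  · simp

lemma hasFDerivAt_Hfun {k : ℕ} (G : Matrix (Fin k) (Fin n) (ZMod 2)) (u : Fin n → ℝ) :
    HasFDerivAt (Hfun G) (∑ x ∈ code G, cpD x u) u := by
  exact HasFDerivAt.fun_sum fun x _ => hasFDerivAt_codePoly x u

lemma fderiv_Hfun_single {k : ℕ} (G : Matrix (Fin k) (Fin n) (ZMod 2)) (u : Fin n → ℝ)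
    (i : Fin n) :
    fderiv ℝ (Hfun G) u (Pi.single i 1) =
      ∑ x ∈ code G, (if x i = 1 then (1:ℝ) else -1) *
        ∏ l ∈ Finset.univ.erase i, if x l = 1 then u l else 1 - u l := by
  rw [(hasFDerivAt_Hfun G u).fderiv, ContinuousLinearMap.sum_apply]
  exact Finset.sum_congr rfl fun x _ => cpD_apply x u i

lemma key_identity {k : ℕ} (G : Matrix (Fin k) (Fin n) (ZMod 2)) (u : Fin n → ℝ) (i : Fin n) :
    Ifun G i u - u i * Hfun G u =
      u i * (1 - u i) * fderiv ℝ (Hfun G) u (Pi.single i 1) := by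
  rw [fderiv_Hfun_single, Ifun, Hfun, Finset.sum_filter, Finset.mul_sum, Finset.mul_sum,
    ← Finset.sum_sub_distrib]
  refine Finset.sum_congr rfl fun x _ => ?_
  rw [codePoly, ← Finset.mul_prod_erase _ _ (Finset.mem_univ i)]
  by_cases hx : x i = 1 <;> simp only [hx, if_pos, if_neg, if_true, if_false] <;> ring

lemma Hfun_pos {k : ℕ} (hk : 0 < k) (G : Matrix (Fin k) (Fin n) (ZMod 2)) (u : Fin n → ℝ)
    (hu : ∀ i, u i ∈ Set.Ioo (0:ℝ) 1) : 0 < Hfun G u := by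
  have hne : (code G).Nonempty := by
    have : Nonempty (Fin k) := ⟨⟨0, hk⟩⟩
    exact Finset.Nonempty.image ⟨Classical.arbitrary _, Finset.mem_univ _⟩ _
  refine Finset.sum_pos (fun x _ => ?_) hne
  refine Finset.prod_pos fun l _ => ?_
  rcases hu l with ⟨h0, h1⟩
  split
  · exact h0
  · linarith

end Aux

/-- The identity `I_i(u) - u_i H(u) = u_i (1-u_i) ∂H/∂u_i(u)` holds for all `u`;
consequently on the open cube `f_i(u) - u_i = u_i(1-u_i) ∂(log H)/∂u_i(u)`, and `u` is a
fixed point of `f` iff it is an equilibrium of the gradient system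
`du/dt = grad(log H(u))`. -/
theorem stmt10 {k n : ℕ} (hk : 0 < k) (hkn : k ≤ n)
    (G : Matrix (Fin k) (Fin n) (ZMod 2))
    (hrank : G.rank = k) (hcols : ∀ i : Fin n, Gᵀ i ≠ 0) :
    (∀ (u : Fin n → ℝ) (i : Fin n),
      Ifun G i u - u i * Hfun G u =
        u i * (1 - u i) * fderiv ℝ (Hfun G) u (Pi.single i 1)) ∧
    (∀ u : Fin n → ℝ, (∀ i, u i ∈ Set.Ioo (0:ℝ) 1) →
      (∀ i : Fin n, fmap G i u - u i =
        u i * (1 - u i) * fderiv ℝ (fun v => Real.log (Hfun G v)) u (Pi.single i 1)) ∧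
      ((∀ i : Fin n, fmap G i u = u i) ↔
        (∀ i : Fin n, fderiv ℝ (fun v => Real.log (Hfun G v)) u (Pi.single i 1) = 0))) := by
  constructor
  · intro u i
    exact key_identity G u i
  · intro u hu
    have hH := Hfun_pos hk G u hu
    have hne : Hfun G u ≠ 0 := ne_of_gt hH
    have hlog : ∀ i : Fin n, fderiv ℝ (fun v => Real.log (Hfun G v)) u (Pi.single i 1) =
        (Hfun G u)⁻¹ * fderiv ℝ (Hfun G) u (Pi.single i 1) := by
      intro i
      rw [((hasFDerivAt_Hfun G u).log hne).fderiv, (hasFDerivAt_Hfun G u).fderiv]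
      simp
    have main : ∀ i : Fin n, fmap G i u - u i =
        u i * (1 - u i) * fderiv ℝ (fun v => Real.log (Hfun G v)) u (Pi.single i 1) := by
      intro i
      rw [hlog i]
      have h1 : fmap G i u - u i = (Ifun G i u - u i * Hfun G u) / Hfun G u := by
        rw [fmap]; field_simp
      rw [h1, key_identity G u i]
      field_simp
    refine ⟨main, ?_⟩
    constructor
    · intro h i
      have := main i
      rw [h i, sub_self] at this
      rcases hu i with ⟨h0, h1⟩
      have hne2 : u i * (1 - u i) ≠ 0 := mul_ne_zero (ne_of_gt h0) (by linarith)
      rcases mul_eq_zero.mp this.symm with h' | h'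
      · exact absurd h' hne2
      · exact h'
    · intro h i
      have := main i
      rw [h i, mul_zero] at this
      linarith [this]
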